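/- Let q be a power of an odd prime, n a positive integer, 0 < t < r₁ < r₂ < ⋯ < r_k < n, and a₁, …, a_k nonzero elements of F_{q^n} such that a_i^{q^{t}-1} = 1 for all i = 1, …, k. Then S(x) = Σ_{i=1}^{k} a_i x^{q^{r_i}} is scattered of index t over F_{q^n} if and only if for every ρ ∈ F_{q^n}^* \ F_q, the map S_ρ^t : F_{q^n} → F_{q^n} given by S_ρ^t(x) = Σ_{i=1}^{k} a_i (ρ^{q^{r_i - t}} - ρ) x^{q^{r_i - t}} is a bijection of F_{q^n} (i.e., a permutation polynomial of F_{q^n}). -/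

import Mathlib

/-- A map `S : L → L` on the field `L = F_{q^n}` is scattered of index `t` over
`F_{q^n}/F_q` if for all nonzero `y, z`, `S(y)/y^{q^t} = S(z)/z^{q^t}` implies
`y/z ∈ F_q`.  Membership of `y/z` in the subfield `F_q` is expressed via its
characterization as the fixed field of the `q`-power Frobenius: `(y/z)^q = y/z`. -/
def IsScattered (q t : ℕ) {L : Type} [Field L] (S : L → L) : Prop :=
  ∀ y z : L, y ≠ 0 → z ≠ 0 → S y * z ^ q ^ t = S z * y ^ q ^ t → (y / z) ^ q = y / z

/-- Let q be a power of an odd prime, n a positive integer,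
0 < t < r₁ < r₂ < ⋯ < r_k < n, and a₁, …, a_k nonzero elements of F_{q^n} with
a_i^{q^t-1} = 1 for all i = 1, …, k.  Then S(x) = Σ_{i=1}^k a_i x^{q^{r_i}} is
scattered of index t over F_{q^n} iff for every ρ ∈ F_{q^n}^* \ F_q (i.e. ρ ≠ 0
not fixed by the q-power Frobenius), the map
S_ρ^t(x) = Σ_{i=1}^k a_i (ρ^{q^{r_i - t}} - ρ) x^{q^{r_i - t}} is a bijection of
F_{q^n}.  (Indices: `Fin k`, where `⟨0, hk⟩` corresponds to the subscript 1.) -/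
theorem stmt9 (q n k t : ℕ)
    (hq : ∃ p m : ℕ, p.Prime ∧ Odd p ∧ 0 < m ∧ q = p ^ m)
    (hn : 0 < n) (hk : 0 < k)
    (r : Fin k → ℕ) (hmono : StrictMono r)
    (ht : 0 < t) (htr : t < r ⟨0, hk⟩) (hrn : ∀ i, r i < n)
    (L : Type) [Field L] [Fintype L] (hcard : Fintype.card L = q ^ n)
    (a : Fin k → L) (ha : ∀ i, a i ≠ 0)
    (hord : ∀ i : Fin k, a i ^ (q ^ t - 1) = 1) :
    IsScattered q t (fun x : L => ∑ i, a i * x ^ q ^ r i) ↔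
    ∀ ρ : L, ρ ≠ 0 → ρ ^ q ≠ ρ →
      Function.Bijective
        (fun x : L => ∑ i, a i * (ρ ^ q ^ (r i - t) - ρ) * x ^ q ^ (r i - t)) := by
  classical
  obtain ⟨p, m, hp, hodd, hm, rfl⟩ := hq
  haveI : Fact p.Prime := ⟨hp⟩
  -- the characteristic of L is p
  set c := ringChar L with hc
  haveI : CharP L c := ringChar.charP L
  have hcprime : c.Prime := CharP.char_is_prime L c
  obtain ⟨d, _, hcard'⟩ := FiniteField.card L c
  have hcp : c = p := by
    have h1 : c ∣ (p ^ m) ^ n := by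
      rw [← hcard, hcard']
      exact dvd_pow_self c d.ne_zero
    have h2 : c ∣ p := hcprime.dvd_of_dvd_pow (hcprime.dvd_of_dvd_pow h1)
    exact (Nat.prime_dvd_prime_iff_eq hcprime hp).mp h2
  haveI hCharP : CharP L p := hcp ▸ (ringChar.charP L)
  -- basic exponent arithmetic
  have hqpow : ∀ s : ℕ, (p ^ m) ^ s = p ^ (m * s) := fun s => by rw [← pow_mul]
  have hq1 : 1 ≤ (p ^ m) ^ t := Nat.one_le_pow _ _ (Nat.pow_pos hp.pos)
  have hrt : ∀ i : Fin k, t ≤ r i := by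
    intro i
    have h0 : (⟨0, hk⟩ : Fin k) ≤ i := by simp [Fin.le_def]
    exact le_trans htr.le (hmono.monotone h0)
  have hsplit : ∀ i : Fin k, (p ^ m) ^ (r i - t) * (p ^ m) ^ t = (p ^ m) ^ r i := by
    intro i
    rw [← pow_add, Nat.sub_add_cancel (hrt i)]
  -- a_i is fixed by the q^t-power map
  have hat : ∀ i : Fin k, a i ^ (p ^ m) ^ t = a i := by
    intro i
    calc a i ^ (p ^ m) ^ t = a i ^ ((p ^ m) ^ t - 1) * a i := by
          rw [← pow_succ, Nat.sub_add_cancel hq1]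
      _ = a i := by rw [hord i, one_mul]
  -- subtraction under q^s powers (Frobenius additivity)
  have hsub : ∀ (s : ℕ) (x y : L), (x - y) ^ (p ^ m) ^ s = x ^ (p ^ m) ^ s - y ^ (p ^ m) ^ s := by
    intro s x y
    rw [hqpow s]
    exact sub_pow_char_pow x y (m * s)
  -- the key identity: (S_ρ^t z)^{q^t} = S(ρ z) - ρ^{q^t} S(z)
  have key : ∀ ρ z : L,
      (∑ i, a i * (ρ ^ (p ^ m) ^ (r i - t) - ρ) * z ^ (p ^ m) ^ (r i - t)) ^ (p ^ m) ^ t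
        = (∑ i, a i * (ρ * z) ^ (p ^ m) ^ r i)
          - ρ ^ (p ^ m) ^ t * ∑ i, a i * z ^ (p ^ m) ^ r i := by
    intro ρ z
    have hsum : ∀ (f : Fin k → L), (∑ i, f i) ^ (p ^ m) ^ t = ∑ i, (f i) ^ (p ^ m) ^ t := by
      intro f
      rw [hqpow t]
      exact map_sum (iterateFrobenius L p (m * t)) f Finset.univ
    rw [hsum, Finset.mul_sum, ← Finset.sum_sub_distrib]
    apply Finset.sum_congr rfl
    intro i _
    rw [mul_pow, mul_pow, hat i, hsub t,
      ← pow_mul ρ ((p ^ m) ^ (r i - t)) ((p ^ m) ^ t),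
      ← pow_mul z ((p ^ m) ^ (r i - t)) ((p ^ m) ^ t), hsplit i, mul_pow]
    ring
  -- S_ρ^t maps 0 to 0
  have hz0 : ∀ ρ : L, ∑ i, a i * (ρ ^ (p ^ m) ^ (r i - t) - ρ) * (0 : L) ^ (p ^ m) ^ (r i - t)
      = 0 := by
    intro ρ
    apply Finset.sum_eq_zero
    intro i _
    rw [zero_pow (pow_pos (pow_pos hp.pos m) _).ne', mul_zero]
  -- S_ρ^t is additive w.r.t. subtraction
  have haddsub : ∀ ρ x y : L,
      (∑ i, a i * (ρ ^ (p ^ m) ^ (r i - t) - ρ) * x ^ (p ^ m) ^ (r i - t))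
        - (∑ i, a i * (ρ ^ (p ^ m) ^ (r i - t) - ρ) * y ^ (p ^ m) ^ (r i - t))
      = ∑ i, a i * (ρ ^ (p ^ m) ^ (r i - t) - ρ) * (x - y) ^ (p ^ m) ^ (r i - t) := by
    intro ρ x y
    rw [← Finset.sum_sub_distrib]
    apply Finset.sum_congr rfl
    intro i _
    rw [hsub (r i - t) x y]
    ring
  -- the q^t-power map is injective
  have hfrobinj : Function.Injective (fun x : L => x ^ (p ^ m) ^ t) := by
    have : (fun x : L => x ^ (p ^ m) ^ t) = (iterateFrobenius L p (m * t)) := by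
      funext x
      rw [iterateFrobenius_def, hqpow t]
    rw [this]
    exact (iterateFrobenius L p (m * t)).injective
  constructor
  · -- scattered → bijective for all ρ ∉ F_q
    intro hS ρ hρ0 hρq
    rw [Function.Bijective, and_iff_left_of_imp (Finite.injective_iff_bijective.mp · |>.2)]
    intro x y hxy
    by_contra hne
    have hw : x - y ≠ 0 := sub_ne_zero_of_ne hne
    have hxy' : (∑ i, a i * (ρ ^ (p ^ m) ^ (r i - t) - ρ) * x ^ (p ^ m) ^ (r i - t))
        = ∑ i, a i * (ρ ^ (p ^ m) ^ (r i - t) - ρ) * y ^ (p ^ m) ^ (r i - t) := hxy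
    have h0 : ∑ i, a i * (ρ ^ (p ^ m) ^ (r i - t) - ρ) * (x - y) ^ (p ^ m) ^ (r i - t) = 0 := by
      rw [← haddsub, hxy', sub_self]
    have h1 := key ρ (x - y)
    rw [h0, zero_pow (Nat.one_le_iff_ne_zero.mp hq1)] at h1
    have h2 : (∑ i, a i * (ρ * (x - y)) ^ (p ^ m) ^ r i)
        = ρ ^ (p ^ m) ^ t * ∑ i, a i * (x - y) ^ (p ^ m) ^ r i := by
      exact sub_eq_zero.mp h1.symm
    have h3 : (∑ i, a i * (ρ * (x - y)) ^ (p ^ m) ^ r i) * (x - y) ^ (p ^ m) ^ t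
        = (∑ i, a i * (x - y) ^ (p ^ m) ^ r i) * (ρ * (x - y)) ^ (p ^ m) ^ t := by
      rw [h2, mul_pow]
      ring
    have h4 := hS (ρ * (x - y)) (x - y) (mul_ne_zero hρ0 hw) hw h3
    rw [mul_div_assoc, div_self hw, mul_one] at h4
    exact hρq h4
  · -- bijective for all ρ ∉ F_q → scattered
    intro hB y z hy hz heq
    by_contra hcon
    set ρ := y / z with hρ
    have hρ0 : ρ ≠ 0 := div_ne_zero hy hz
    have hρz : ρ * z = y := div_mul_cancel₀ y hz
    have hinj := (hB ρ hρ0 hcon).injective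
    have hSz : ∑ i, a i * (ρ ^ (p ^ m) ^ (r i - t) - ρ) * z ^ (p ^ m) ^ (r i - t) = 0 := by
      apply hfrobinj
      simp only [zero_pow (Nat.one_le_iff_ne_zero.mp hq1)]
      rw [key ρ z, hρz, sub_eq_zero]
      have hzt : z ^ (p ^ m) ^ t ≠ 0 := pow_ne_zero _ hz
      have heq' : (∑ i, a i * y ^ (p ^ m) ^ r i) * z ^ (p ^ m) ^ t
          = (∑ i, a i * z ^ (p ^ m) ^ r i) * y ^ (p ^ m) ^ t := heq
      apply mul_right_cancel₀ hzt
      rw [heq', ← hρz, mul_pow]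
      ring
    have h5 := hSz.trans (hz0 ρ).symm
    exact hz (hinj (a₁ := z) (a₂ := 0) h5)
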